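/- Let N ≥ 1, let Q be an N×N real matrix, let α*, η, T ∈ ℝ, and let β*₁, …, β*_N ∈ ℝ. Let B, A₁, …, A_N : ℝ → ℝ be differentiable on [0, T], and define P_i(t, r) = exp(A_i(t) − B(t)r) for 1 ≤ i ≤ N. Then the following are equivalent: (i) for every 1 ≤ i ≤ N, every t ∈ [0, T] and every r > 0, ∂P_i/∂t(t,r) + α*(β*_i − r) ∂P_i/∂r(t,r) + Σ_{j=1}^N Q_{ji} P_j(t,r) + (1/2)η²r ∂²P_i/∂r²(t,r) − r P_i(t,r) = 0; (ii) for every t ∈ [0, T], B′(t) = (1/2)η²B(t)² + α*B(t) − 1 and, for every 1 ≤ i ≤ N, A_i′(t) = α*β*_i B(t) − e^{−A_i(t)} Σ_{j=1}^N Q_{ji} e^{A_j(t)}. -/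

import Mathlib

/-- The regime-switching bond prices `P_i(t,r) = exp(A_i(t) − B(t)r)` satisfy the `N`
coupled pricing PDEs if and only if `B` solves the Riccati equation
`B' = ½η²B² + α*B − 1` and each `A_i` solves
`A_i' = α*β*_i B − e^{−A_i} Σ_j Q_{ji} e^{A_j}`. -/
theorem stmt6 (N : ℕ) (hN : 1 ≤ N) (Q : Matrix (Fin N) (Fin N) ℝ)
    (α η T : ℝ) (β : Fin N → ℝ)
    (B : ℝ → ℝ) (B' : ℝ → ℝ)
    (A : Fin N → ℝ → ℝ) (A' : Fin N → ℝ → ℝ)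
    (hB : ∀ t ∈ Set.Icc (0 : ℝ) T, HasDerivAt B (B' t) t)
    (hA : ∀ i, ∀ t ∈ Set.Icc (0 : ℝ) T, HasDerivAt (A i) (A' i t) t)
    (P : Fin N → ℝ → ℝ → ℝ)
    (hP : P = fun i t r => Real.exp (A i t - B t * r)) :
    (∀ i, ∀ t ∈ Set.Icc (0 : ℝ) T, ∀ r > (0 : ℝ),
        deriv (fun s => P i s r) t
          + α * (β i - r) * deriv (fun x => P i t x) r
          + (∑ j, Q j i * P j t r)
          + (1 / 2) * η ^ 2 * r * deriv (deriv (fun x => P i t x)) r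
          - r * P i t r = 0)
    ↔ ((∀ t ∈ Set.Icc (0 : ℝ) T,
          B' t = (1 / 2) * η ^ 2 * (B t) ^ 2 + α * B t - 1) ∧
       (∀ i, ∀ t ∈ Set.Icc (0 : ℝ) T,
          A' i t = α * β i * B t
            - Real.exp (-(A i t)) * ∑ j, Q j i * Real.exp (A j t))) := by
  have hE : ∀ x : ℝ, Real.exp x ≠ 0 := fun x => (Real.exp_pos x).ne'
  simp only [hP]
  have hdrHas : ∀ (i : Fin N) (t r : ℝ),
      HasDerivAt (fun x => Real.exp (A i t - B t * x))
        (-B t * Real.exp (A i t - B t * r)) r := by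
    intro i t r
    have h1 : HasDerivAt (fun x : ℝ => A i t - B t * x) (-(B t * 1)) r :=
      ((hasDerivAt_id r).const_mul (B t)).const_sub (A i t)
    have h2 := h1.exp
    convert h2 using 1
    ring
  have hdr : ∀ (i : Fin N) (t r : ℝ),
      deriv (fun x => Real.exp (A i t - B t * x)) r
        = -B t * Real.exp (A i t - B t * r) :=
    fun i t r => (hdrHas i t r).deriv
  have hdr2 : ∀ (i : Fin N) (t r : ℝ),
      deriv (deriv (fun x => Real.exp (A i t - B t * x))) r
        = B t ^ 2 * Real.exp (A i t - B t * r) := by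
    intro i t r
    have hfun : deriv (fun x => Real.exp (A i t - B t * x))
        = fun x => -B t * Real.exp (A i t - B t * x) := funext (hdr i t)
    rw [hfun]
    have h2 := ((hdrHas i t r).const_mul (-B t)).deriv
    rw [h2]; ring
  have hdt : ∀ (i : Fin N), ∀ t ∈ Set.Icc (0 : ℝ) T, ∀ r : ℝ,
      deriv (fun s => Real.exp (A i s - B s * r)) t
        = (A' i t - B' t * r) * Real.exp (A i t - B t * r) := by
    intro i t ht r
    have h1 : HasDerivAt (fun s => Real.exp (A i s - B s * r))
        (Real.exp (A i t - B t * r) * (A' i t - B' t * r)) t :=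
      ((hA i t ht).sub ((hB t ht).mul_const r)).exp
    rw [h1.deriv]; ring
  have hsum : ∀ (i : Fin N) (t r : ℝ),
      (∑ j, Q j i * Real.exp (A j t - B t * r))
        = Real.exp (-(B t * r)) * ∑ j, Q j i * Real.exp (A j t) := by
    intro i t r
    rw [Finset.mul_sum]
    refine Finset.sum_congr rfl fun j _ => ?_
    rw [sub_eq_add_neg, Real.exp_add]; ring
  have hx : ∀ (i : Fin N) (t r : ℝ),
      Real.exp (A i t - B t * r)
        = Real.exp (A i t) * Real.exp (-(B t * r)) := by
    intro i t r
    rw [sub_eq_add_neg, Real.exp_add]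
  constructor
  · intro h
    have key : ∀ t ∈ Set.Icc (0 : ℝ) T, ∀ i : Fin N, ∀ r > (0 : ℝ),
        Real.exp (A i t) * ((A' i t - α * β i * B t)
          + r * (-(B' t) + α * B t + 1 / 2 * η ^ 2 * (B t) ^ 2 - 1))
          + (∑ j, Q j i * Real.exp (A j t)) = 0 := by
      intro t ht i r hr
      have h0 := h i t ht r hr
      rw [hdt i t ht r, hdr, hdr2, hsum, hx] at h0
      have h1 : Real.exp (-(B t * r)) * (Real.exp (A i t) * ((A' i t - α * β i * B t)
          + r * (-(B' t) + α * B t + 1 / 2 * η ^ 2 * (B t) ^ 2 - 1))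
          + (∑ j, Q j i * Real.exp (A j t))) = 0 := by
        linear_combination h0
      rcases mul_eq_zero.1 h1 with h2 | h2
      · exact absurd h2 (hE _)
      · exact h2
    have hD : ∀ t ∈ Set.Icc (0 : ℝ) T,
        B' t = 1 / 2 * η ^ 2 * (B t) ^ 2 + α * B t - 1 := by
      intro t ht
      have h1 := key t ht ⟨0, hN⟩ 1 one_pos
      have h2 := key t ht ⟨0, hN⟩ 2 two_pos
      have h3 : Real.exp (A ⟨0, hN⟩ t)
          * (-(B' t) + α * B t + 1 / 2 * η ^ 2 * (B t) ^ 2 - 1) = 0 := by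
        linear_combination h2 - h1
      rcases mul_eq_zero.1 h3 with h4 | h4
      · exact absurd h4 (hE _)
      · linarith
    refine ⟨hD, ?_⟩
    intro i t ht
    have h1 := key t ht i 1 one_pos
    have hD' := hD t ht
    have h2 : Real.exp (A i t) * (A' i t - α * β i * B t)
        + (∑ j, Q j i * Real.exp (A j t)) = 0 := by
      linear_combination h1 + Real.exp (A i t) * hD'
    have hinv : Real.exp (-(A i t)) * Real.exp (A i t) = 1 := by
      rw [← Real.exp_add]; simp
    linear_combination Real.exp (-(A i t)) * h2
      - (A' i t - α * β i * B t) * hinv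
  · rintro ⟨hRic, hAi⟩ i t ht r hr
    rw [hdt i t ht r, hdr, hdr2, hsum, hx]
    have hRic' := hRic t ht
    have hAi' := hAi i t ht
    have hinv : Real.exp (A i t) * Real.exp (-(A i t)) = 1 := by
      rw [← Real.exp_add]; simp
    linear_combination Real.exp (-(B t * r)) * Real.exp (A i t) * hAi'
      - Real.exp (-(B t * r)) * Real.exp (A i t) * r * hRic'
      - Real.exp (-(B t * r)) * (∑ j, Q j i * Real.exp (A j t)) * hinv
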